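/- Let χ(γ) = ∑_{k=1}^M q_k γ^{k-1}/(k-1)! with q_k ≥ 0 not all zero, τ ≥ 1, and define f(γ) = γ χ(γ) e^{-γ} / (e^{-γ} + τ(1 - e^{-γ})) for γ ≥ 0. If q_1 ≤ 2q_2 ≤ 3q_3 ≤ ⋯ ≤ M q_M, then f is unimodal on [0, ∞): there exists γ* ≥ 0 such that f is nondecreasing on [0, γ*] and nonincreasing on [γ*, ∞). -/

import Mathlib

open Real Finset Set

noncomputable def Pf (M : ℕ) (b : ℕ → ℝ) (x : ℝ) : ℝ :=
  ∑ j ∈ Finset.range M, b j * x ^ (j+1) / (j+1).factorial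


noncomputable def P1 (M : ℕ) (b : ℕ → ℝ) (x : ℝ) : ℝ :=
  ∑ j ∈ Finset.range M, b j * x ^ j / j.factorial


noncomputable def P2 (M : ℕ) (b : ℕ → ℝ) (x : ℝ) : ℝ :=
  ∑ i ∈ Finset.range (M-1), b (i+1) * x ^ i / i.factorial


lemma hasDerivAt_Pf (M : ℕ) (b : ℕ → ℝ) (x : ℝ) :
    HasDerivAt (Pf M b) (P1 M b x) x := by
  have h : ∀ j ∈ Finset.range M,
      HasDerivAt (fun y : ℝ => b j * y ^ (j+1) / (j+1).factorial)
        (b j * x ^ j / j.factorial) x := by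
    intro j _
    have h1 : HasDerivAt (fun y : ℝ => y ^ (j+1)) ((j+1) * x ^ j) x := by
      simpa using hasDerivAt_pow (j+1) x
    have h2 := (h1.const_mul (b j)).div_const ((j+1).factorial : ℝ)
    refine h2.congr_deriv ?_
    have : ((j+1).factorial : ℝ) = (j+1) * j.factorial := by
      push_cast [Nat.factorial_succ]; ring
    rw [this]
    have hj : (j.factorial : ℝ) ≠ 0 := by positivity
    field_simp
  exact HasDerivAt.fun_sum h


lemma hasDerivAt_P1 (M : ℕ) (hM : 1 ≤ M) (b : ℕ → ℝ) (x : ℝ) :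
    HasDerivAt (P1 M b) (P2 M b x) x := by
  have h : ∀ j ∈ Finset.range M,
      HasDerivAt (fun y : ℝ => b j * y ^ j / j.factorial)
        (b j * (j * x ^ (j-1)) / j.factorial) x := by
    intro j _
    exact ((hasDerivAt_pow j x).const_mul (b j)).div_const _
  have h2 := HasDerivAt.fun_sum h
  have e : ∑ j ∈ Finset.range M, b j * (j * x ^ (j-1)) / j.factorial = P2 M b x := by
    obtain ⟨m, rfl⟩ : ∃ m, M = m + 1 := ⟨M - 1, (Nat.succ_pred_eq_of_pos hM).symm⟩
    rw [Finset.sum_range_succ']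
    simp only [P2, Nat.add_sub_cancel]
    rw [show b 0 * ((0:ℕ) * x ^ (0-1)) / (Nat.factorial 0 : ℝ) = 0 by norm_num]
    rw [add_zero]
    apply Finset.sum_congr rfl
    intro i _
    have : ((i+1).factorial : ℝ) = (i+1) * i.factorial := by
      push_cast [Nat.factorial_succ]; ring
    rw [this]
    have hj : (i.factorial : ℝ) ≠ 0 := by positivity
    have : (i:ℝ) + 1 ≠ 0 := by positivity
    field_simp
    push_cast; ring
  rw [e] at h2
  exact h2

lemma Pf_nonneg (M : ℕ) (b : ℕ → ℝ) (hb : ∀ j < M, 0 ≤ b j) {x : ℝ} (hx : 0 ≤ x) :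
    0 ≤ Pf M b x := by
  apply Finset.sum_nonneg; intro j hj
  have := hb j (Finset.mem_range.mp hj); positivity


lemma P1_nonneg (M : ℕ) (b : ℕ → ℝ) (hb : ∀ j < M, 0 ≤ b j) {x : ℝ} (hx : 0 ≤ x) :
    0 ≤ P1 M b x := by
  apply Finset.sum_nonneg; intro j hj
  have := hb j (Finset.mem_range.mp hj); positivity


lemma Pf_pos (M : ℕ) (b : ℕ → ℝ) (hM : 1 ≤ M) (hb : ∀ j < M, 0 ≤ b j)
    (hbM : 0 < b (M-1)) {x : ℝ} (hx : 0 < x) : 0 < Pf M b x := by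
  have hmem : M - 1 ∈ Finset.range M := Finset.mem_range.mpr (by omega)
  apply Finset.sum_pos'
    (fun j hj => by have := hb j (Finset.mem_range.mp hj); positivity)
  exact ⟨M-1, hmem, by positivity⟩


lemma P1_pos (M : ℕ) (b : ℕ → ℝ) (hM : 1 ≤ M) (hb : ∀ j < M, 0 ≤ b j)
    (hbM : 0 < b (M-1)) {x : ℝ} (hx : 0 < x) : 0 < P1 M b x := by
  have hmem : M - 1 ∈ Finset.range M := Finset.mem_range.mpr (by omega)
  apply Finset.sum_pos'
    (fun j hj => by have := hb j (Finset.mem_range.mp hj); positivity)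
  exact ⟨M-1, hmem, by positivity⟩


lemma Pf_le (M : ℕ) (b : ℕ → ℝ) (hb : ∀ j < M, 0 ≤ b j) {x : ℝ} (hx : 0 ≤ x) :
    Pf M b x ≤ x * P1 M b x := by
  rw [P1, Finset.mul_sum, Pf]
  apply Finset.sum_le_sum
  intro j hj
  have hbj := hb j (Finset.mem_range.mp hj)
  have h2 : x * (b j * x ^ j / j.factorial) = b j * x ^ (j+1) / j.factorial := by
    rw [pow_succ]; ring
  rw [h2]
  have hf : (j.factorial : ℝ) ≤ ((j+1).factorial : ℝ) := by
    exact_mod_cast Nat.factorial_le (by omega)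
  have hf0 : (0:ℝ) < j.factorial := by positivity
  gcongr


lemma E_eq (M : ℕ) (b : ℕ → ℝ) (hM : 1 ≤ M) (x : ℝ) :
    P2 M b x - P1 M b x =
      (∑ i ∈ Finset.range (M-1), (b (i+1) - b i) * x ^ i / i.factorial)
        - b (M-1) * x ^ (M-1) / (M-1).factorial := by
  obtain ⟨m, rfl⟩ : ∃ m, M = m + 1 := ⟨M - 1, (Nat.succ_pred_eq_of_pos hM).symm⟩
  simp only [P2, P1, Nat.add_sub_cancel]
  rw [Finset.sum_range_succ (fun j => b j * x ^ j / j.factorial) m]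
  have hAB : (∑ i ∈ Finset.range m, b (i+1) * x ^ i / i.factorial)
      - ∑ i ∈ Finset.range m, b i * x ^ i / i.factorial
      = ∑ i ∈ Finset.range m, (b (i+1) - b i) * x ^ i / i.factorial := by
    rw [← Finset.sum_sub_distrib]
    exact Finset.sum_congr rfl (fun i _ => by ring)
  linarith [hAB]

-- Lemma D: downward closedness of {P2 ≥ P1}

lemma E_down (M : ℕ) (b : ℕ → ℝ) (hM : 1 ≤ M)
    (hmono : ∀ i, i + 1 < M → b i ≤ b (i+1)) (hbM : 0 < b (M-1))
    {x y : ℝ} (hx : 0 < x) (hxy : x ≤ y) (hy : P1 M b y ≤ P2 M b y) :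
    P1 M b x ≤ P2 M b x := by
  have hy0 : 0 < y := lt_of_lt_of_le hx hxy
  have key : (P2 M b x - P1 M b x) * y ^ (M-1) ≥ (P2 M b y - P1 M b y) * x ^ (M-1) := by
    rw [E_eq M b hM x, E_eq M b hM y, sub_mul, sub_mul, Finset.sum_mul, Finset.sum_mul]
    have hc : b (M-1) * x ^ (M-1) / (M-1).factorial * y ^ (M-1)
        = b (M-1) * y ^ (M-1) / (M-1).factorial * x ^ (M-1) := by ring
    rw [hc]
    apply sub_le_sub_right
    apply Finset.sum_le_sum
    intro i hi
    have hi' : i < M - 1 := Finset.mem_range.mp hi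
    have hci : 0 ≤ b (i+1) - b i := by
      have := hmono i (by omega); linarith
    have hf0 : (0:ℝ) < i.factorial := by positivity
    have hpow : y ^ i * x ^ (M-1) ≤ x ^ i * y ^ (M-1) := by
      have h1 : x ^ (M-1) = x ^ i * x ^ (M-1-i) := by
        rw [← pow_add]; congr 1; omega
      have h2 : y ^ (M-1) = y ^ i * y ^ (M-1-i) := by
        rw [← pow_add]; congr 1; omega
      rw [h1, h2]
      have : x ^ (M-1-i) ≤ y ^ (M-1-i) := pow_le_pow_left₀ (le_of_lt hx) hxy _
      calc y ^ i * (x ^ i * x ^ (M-1-i)) ≤ y ^ i * (x ^ i * y ^ (M-1-i)) := by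
            apply mul_le_mul_of_nonneg_left _ (by positivity)
            exact mul_le_mul_of_nonneg_left this (by positivity)
        _ = x ^ i * (y ^ i * y ^ (M-1-i)) := by ring
    calc (b (i+1) - b i) * y ^ i / i.factorial * x ^ (M-1)
        = (b (i+1) - b i) / i.factorial * (y ^ i * x ^ (M-1)) := by ring
      _ ≤ (b (i+1) - b i) / i.factorial * (x ^ i * y ^ (M-1)) := by
          apply mul_le_mul_of_nonneg_left hpow (by positivity)
      _ = (b (i+1) - b i) * x ^ i / i.factorial * y ^ (M-1) := by ring
  have h1 : 0 ≤ (P2 M b y - P1 M b y) * x ^ (M-1) := by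
    apply mul_nonneg (by linarith) (by positivity)
  have h2 : 0 ≤ (P2 M b x - P1 M b x) * y ^ (M-1) := le_trans h1 key
  nlinarith [pow_pos hy0 (M-1)]

lemma lemA (M : ℕ) (b : ℕ → ℝ) (hM : 1 ≤ M) (hb : ∀ j < M, 0 ≤ b j)
    (hmono : ∀ i, i + 1 < M → b i ≤ b (i+1)) (hbM : 0 < b (M-1))
    {γ : ℝ} (hγ : 0 < γ) (hD1 : P1 M b γ ≤ P2 M b γ) :
    P1 M b γ ≤ Real.exp γ * (P1 M b γ - Pf M b γ) := by
  have contP1 : Continuous (P1 M b) :=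
    Differentiable.continuous (fun x => (hasDerivAt_P1 M hM b x).differentiableAt)
  have contPf : Continuous (Pf M b) :=
    Differentiable.continuous (fun x => (hasDerivAt_Pf M b x).differentiableAt)
  set w : ℝ → ℝ := fun x => Real.exp x * (P1 M b x - Pf M b x) / P1 M b x with hw_def
  have hw : ∀ x : ℝ, 0 < x →
      HasDerivAt w (Real.exp x * Pf M b x * (P2 M b x - P1 M b x) / (P1 M b x)^2) x := by
    intro x hx
    have hP1x : P1 M b x ≠ 0 := ne_of_gt (P1_pos M b hM hb hbM hx)
    have hnum : HasDerivAt (fun y => Real.exp y * (P1 M b y - Pf M b y))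
        (Real.exp x * (P1 M b x - Pf M b x) + Real.exp x * (P2 M b x - P1 M b x)) x :=
      (Real.hasDerivAt_exp x).mul ((hasDerivAt_P1 M hM b x).sub (hasDerivAt_Pf M b x))
    have h := hnum.div (hasDerivAt_P1 M hM b x) hP1x
    have heq : Real.exp x * Pf M b x * (P2 M b x - P1 M b x) / (P1 M b x)^2
        = ((Real.exp x * (P1 M b x - Pf M b x) + Real.exp x * (P2 M b x - P1 M b x))
            * P1 M b x - Real.exp x * (P1 M b x - Pf M b x) * P2 M b x) / (P1 M b x)^2 := by
      ring
    rw [heq]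
    exact h
  have key : ∀ t, 0 < t → t ≤ γ → w t ≤ w γ := by
    intro t ht htγ
    have hmon : MonotoneOn w (Set.Icc t γ) := by
      apply monotoneOn_of_deriv_nonneg (convex_Icc t γ)
      · apply ContinuousOn.div
        · exact (Real.continuous_exp.mul (contP1.sub contPf)).continuousOn
        · exact contP1.continuousOn
        · intro x hx
          exact ne_of_gt (P1_pos M b hM hb hbM (lt_of_lt_of_le ht hx.1))
      · intro x hx
        rw [interior_Icc] at hx
        exact ((hw x (ht.trans hx.1)).differentiableAt).differentiableWithinAt
      · intro x hx
        rw [interior_Icc] at hx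
        have hx0 : 0 < x := ht.trans hx.1
        rw [(hw x hx0).deriv]
        have hE : P1 M b x ≤ P2 M b x :=
          E_down M b hM hmono hbM hx0 (le_of_lt hx.2) hD1
        have hPf0 := Pf_nonneg M b hb hx0.le
        apply div_nonneg _ (sq_nonneg _)
        exact mul_nonneg (mul_nonneg (Real.exp_pos x).le hPf0) (by linarith)
    exact hmon ⟨le_refl t, htγ⟩ ⟨htγ, le_refl γ⟩ htγ
  have hlow : ∀ t, 0 < t → t ≤ 1 → 1 - t^2 ≤ w t := by
    intro t ht ht1
    have hP1t : 0 < P1 M b t := P1_pos M b hM hb hbM ht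
    have hPfle : Pf M b t ≤ t * P1 M b t := Pf_le M b hb ht.le
    have h1 : 1 - t ≤ 1 - Pf M b t / P1 M b t := by
      have : Pf M b t / P1 M b t ≤ t := by
        rw [div_le_iff₀ hP1t]; linarith
      linarith
    have hexp : 1 + t ≤ Real.exp t := by linarith [Real.add_one_le_exp t]
    have hwt : w t = Real.exp t * (1 - Pf M b t / P1 M b t) := by
      rw [hw_def]
      field_simp
    have h0 : (0:ℝ) ≤ 1 - t := by linarith
    rw [hwt]
    calc 1 - t^2 = (1+t)*(1-t) := by ring
      _ ≤ Real.exp t * (1-t) := mul_le_mul_of_nonneg_right hexp h0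
      _ ≤ Real.exp t * (1 - Pf M b t / P1 M b t) :=
          mul_le_mul_of_nonneg_left h1 (Real.exp_pos t).le
  have hlim : (1:ℝ) ≤ w γ := by
    have hne : 0 < min γ 1 := lt_min hγ one_pos
    have hev : ∀ᶠ t in nhdsWithin 0 (Set.Ioi 0), 1 - t^2 ≤ w γ := by
      filter_upwards [Ioc_mem_nhdsGT_of_mem (Set.left_mem_Ico.mpr hne)] with t ht
      exact le_trans (hlow t ht.1 (le_trans ht.2 (min_le_right _ _)))
        (key t ht.1 (le_trans ht.2 (min_le_left _ _)))
    have htend : Filter.Tendsto (fun t : ℝ => 1 - t^2) (nhdsWithin 0 (Set.Ioi 0)) (nhds 1) := by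
      have h2 : Filter.Tendsto (fun t : ℝ => 1 - t^2) (nhds 0) (nhds 1) := by
        have hc : Continuous (fun t : ℝ => 1 - t^2) :=
          continuous_const.sub (continuous_pow 2)
        simpa using hc.tendsto (0:ℝ)
      exact h2.mono_left nhdsWithin_le_nhds
    exact le_of_tendsto htend hev
  have hP1γ : 0 < P1 M b γ := P1_pos M b hM hb hbM hγ
  have := (one_le_div hP1γ).mp hlim
  linarith

noncomputable def Gf (M : ℕ) (b : ℕ → ℝ) (τ x : ℝ) : ℝ :=
  τ * (P1 M b x - Pf M b x) - (τ-1) * Real.exp (-x) * P1 M b x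


lemma hasDerivAt_expNeg (x : ℝ) : HasDerivAt (fun y : ℝ => Real.exp (-y)) (-Real.exp (-x)) x := by
  simpa [Function.comp_def] using (Real.hasDerivAt_exp (-x)).comp x (hasDerivAt_neg x)


lemma hasDerivAt_Gf (M : ℕ) (hM : 1 ≤ M) (b : ℕ → ℝ) (τ x : ℝ) :
    HasDerivAt (Gf M b τ)
      ((P2 M b x - P1 M b x) * (τ - (τ-1) * Real.exp (-x))) x := by
  have h1 : HasDerivAt (fun y => τ * (P1 M b y - Pf M b y))
      (τ * (P2 M b x - P1 M b x)) x :=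
    ((hasDerivAt_P1 M hM b x).sub (hasDerivAt_Pf M b x)).const_mul τ
  have h2 : HasDerivAt (fun y => (τ-1) * Real.exp (-y) * P1 M b y)
      (((τ-1) * -Real.exp (-x)) * P1 M b x + ((τ-1) * Real.exp (-x)) * P2 M b x) x :=
    (((hasDerivAt_expNeg x).const_mul (τ-1)).mul (hasDerivAt_P1 M hM b x))
  have h := h1.sub h2
  have heq : (P2 M b x - P1 M b x) * (τ - (τ-1) * Real.exp (-x))
      = τ * (P2 M b x - P1 M b x)
        - (((τ-1) * -Real.exp (-x)) * P1 M b x + ((τ-1) * Real.exp (-x)) * P2 M b x) := by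
    ring
  rw [heq]
  exact h


lemma contGf (M : ℕ) (hM : 1 ≤ M) (b : ℕ → ℝ) (τ : ℝ) : Continuous (Gf M b τ) :=
  Differentiable.continuous (fun x => (hasDerivAt_Gf M hM b τ x).differentiableAt)

-- single crossing

lemma C1 (M : ℕ) (b : ℕ → ℝ) (τ : ℝ) (hM : 1 ≤ M) (hb : ∀ j < M, 0 ≤ b j)
    (hmono : ∀ i, i + 1 < M → b i ≤ b (i+1)) (hbM : 0 < b (M-1)) (hτ : 1 ≤ τ)
    {x y : ℝ} (hx : 0 < x) (hxy : x < y) (hGy : 0 ≤ Gf M b τ y) :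
    0 ≤ Gf M b τ x := by
  by_cases hc : P1 M b x ≤ P2 M b x
  · have hA := lemA M b hM hb hmono hbM hx hc
    have hP1 : 0 < P1 M b x := P1_pos M b hM hb hbM hx
    have hexp : 0 < Real.exp (-x) := Real.exp_pos _
    have h2 : Real.exp (-x) * P1 M b x ≤ P1 M b x - Pf M b x := by
      have h3 := mul_le_mul_of_nonneg_left hA hexp.le
      rw [← mul_assoc, ← Real.exp_add] at h3
      simpa using h3
    rw [Gf]
    nlinarith [mul_le_mul_of_nonneg_left h2 (by linarith : (0:ℝ) ≤ τ),
      mul_pos hexp hP1]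
  · push_neg at hc
    have hant : AntitoneOn (Gf M b τ) (Set.Icc x y) := by
      apply antitoneOn_of_deriv_nonpos (convex_Icc x y)
      · exact (contGf M hM b τ).continuousOn
      · intro z hz
        exact (hasDerivAt_Gf M hM b τ z).differentiableAt.differentiableWithinAt
      · intro z hz
        rw [interior_Icc] at hz
        rw [(hasDerivAt_Gf M hM b τ z).deriv]
        have hz0 : 0 < z := hx.trans hz.1
        have hE : P2 M b z ≤ P1 M b z := by
          by_contra h
          push_neg at h
          exact absurd (E_down M b hM hmono hbM hx hz.1.le h.le) (not_le.mpr hc)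
        have hexp1 : Real.exp (-z) ≤ 1 := Real.exp_le_one_iff.mpr (by linarith)
        have hfac : 0 ≤ τ - (τ-1) * Real.exp (-z) := by
          nlinarith [Real.exp_pos (-z)]
        exact mul_nonpos_of_nonpos_of_nonneg (by linarith) hfac
    have := hant (Set.left_mem_Icc.mpr hxy.le) (Set.right_mem_Icc.mpr hxy.le) hxy.le
    linarith

-- boundedness

lemma Sbound (M : ℕ) (b : ℕ → ℝ) (hM : 1 ≤ M) (hb : ∀ j < M, 0 ≤ b j)
    (hbM : 0 < b (M-1)) :
    ∃ T : ℝ, 1 ≤ T ∧ ∀ x : ℝ, T < x → P1 M b x < Pf M b x := by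
  obtain ⟨m, rfl⟩ : ∃ m, M = m + 1 := ⟨M - 1, (Nat.succ_pred_eq_of_pos hM).symm⟩
  simp only [Nat.add_sub_cancel] at hbM
  set C : ℝ := ∑ j ∈ Finset.range (m+1), b j / j.factorial with hC
  have hC0 : 0 ≤ C := Finset.sum_nonneg (fun j hj => by
    have := hb j (Finset.mem_range.mp hj); positivity)
  refine ⟨max 1 (C * (m+1).factorial / b m), le_max_left _ _, ?_⟩
  intro x hx
  have hx1 : 1 < x := lt_of_le_of_lt (le_max_left _ _) hx
  have hx2 : C * (m+1).factorial / b m < x := lt_of_le_of_lt (le_max_right _ _) hx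
  have hx0 : 0 < x := by linarith
  have hP1le : P1 (m+1) b x ≤ C * x ^ m := by
    rw [hC, Finset.sum_mul, P1]
    apply Finset.sum_le_sum
    intro j hj
    have hj' : j < m + 1 := Finset.mem_range.mp hj
    have hbj := hb j hj'
    have hpow : x ^ j ≤ x ^ m := pow_le_pow_right₀ hx1.le (by omega)
    have hf0 : (0:ℝ) < j.factorial := by positivity
    calc b j * x ^ j / j.factorial ≤ b j * x ^ m / j.factorial := by
          gcongr
      _ = b j / j.factorial * x ^ m := by ring
  have hPfge : b m * x ^ (m+1) / (m+1).factorial ≤ Pf (m+1) b x := by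
    rw [Pf]
    apply Finset.single_le_sum (f := fun j => b j * x ^ (j+1) / ((j+1).factorial : ℝ))
      (fun j hj => by have := hb j (Finset.mem_range.mp hj); positivity)
    exact Finset.mem_range.mpr (by omega)
  have h3 : C < b m * x / (m+1).factorial := by
    rw [lt_div_iff₀ (by positivity)]
    have := (div_lt_iff₀ hbM).mp hx2
    nlinarith
  have h4 : C * x ^ m < b m * x ^ (m+1) / (m+1).factorial := by
    have h5 := mul_lt_mul_of_pos_right h3 (pow_pos hx0 m)
    calc C * x ^ m < b m * x / (m+1).factorial * x ^ m := h5
      _ = b m * x ^ (m+1) / (m+1).factorial := by rw [pow_succ]; ring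
  linarith

noncomputable def Ff (M : ℕ) (b : ℕ → ℝ) (τ x : ℝ) : ℝ :=
  Pf M b x * Real.exp (-x) / (Real.exp (-x) + τ * (1 - Real.exp (-x)))


lemma Df_ge_one {τ x : ℝ} (hτ : 1 ≤ τ) (hx : 0 ≤ x) :
    1 ≤ Real.exp (-x) + τ * (1 - Real.exp (-x)) := by
  have h1 : Real.exp (-x) ≤ 1 := Real.exp_le_one_iff.mpr (by linarith)
  nlinarith [Real.exp_pos (-x)]


lemma hasDerivAt_Ff (M : ℕ) (hM : 1 ≤ M) (b : ℕ → ℝ) {τ x : ℝ} (hτ : 1 ≤ τ) (hx : 0 ≤ x) :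
    HasDerivAt (Ff M b τ)
      (Real.exp (-x) * Gf M b τ x / (Real.exp (-x) + τ * (1 - Real.exp (-x)))^2) x := by
  have hden : Real.exp (-x) + τ * (1 - Real.exp (-x)) ≠ 0 := by
    have := Df_ge_one hτ hx; linarith
  have hnum : HasDerivAt (fun y => Pf M b y * Real.exp (-y))
      (P1 M b x * Real.exp (-x) + Pf M b x * -Real.exp (-x)) x :=
    (hasDerivAt_Pf M b x).mul (hasDerivAt_expNeg x)
  have hd : HasDerivAt (fun y => Real.exp (-y) + τ * (1 - Real.exp (-y)))
      (-Real.exp (-x) + τ * (0 - -Real.exp (-x))) x :=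
    (hasDerivAt_expNeg x).add (((hasDerivAt_const x (1:ℝ)).sub (hasDerivAt_expNeg x)).const_mul τ)
  have h := hnum.div hd hden
  have heq : Real.exp (-x) * Gf M b τ x / (Real.exp (-x) + τ * (1 - Real.exp (-x)))^2
      = ((P1 M b x * Real.exp (-x) + Pf M b x * -Real.exp (-x))
          * (Real.exp (-x) + τ * (1 - Real.exp (-x)))
        - Pf M b x * Real.exp (-x) * (-Real.exp (-x) + τ * (0 - -Real.exp (-x))))
        / (Real.exp (-x) + τ * (1 - Real.exp (-x)))^2 := by
    rw [Gf]; ring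
  rw [heq]
  exact h


theorem stmt_4 (M : ℕ) (q : ℕ → ℝ) (τ : ℝ)
    (hM : 1 ≤ M)
    (hq : ∀ k, 1 ≤ k → k ≤ M → 0 ≤ q k)
    (hq0 : ∃ k, 1 ≤ k ∧ k ≤ M ∧ q k ≠ 0)
    (hτ : 1 ≤ τ)
    (hmono : ∀ k, 1 ≤ k → k ≤ M - 1 → (k : ℝ) * q k ≤ (k + 1 : ℝ) * q (k + 1)) :
    ∃ γs : ℝ, 0 ≤ γs ∧
      MonotoneOn
        (fun γ : ℝ =>
          γ * (∑ k ∈ Finset.range M, q (k + 1) * γ ^ k / k.factorial) * Real.exp (-γ) /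
            (Real.exp (-γ) + τ * (1 - Real.exp (-γ))))
        (Set.Icc 0 γs) ∧
      AntitoneOn
        (fun γ : ℝ =>
          γ * (∑ k ∈ Finset.range M, q (k + 1) * γ ^ k / k.factorial) * Real.exp (-γ) /
            (Real.exp (-γ) + τ * (1 - Real.exp (-γ))))
        (Set.Ici γs) := by
  classical
  set b : ℕ → ℝ := fun j => ((j:ℝ)+1) * q (j+1) with hb_def
  have hb : ∀ j < M, 0 ≤ b j := by
    intro j hj
    have := hq (j+1) (by omega) (by omega)
    have hj1 : (0:ℝ) ≤ (j:ℝ)+1 := by positivity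
    exact mul_nonneg hj1 this
  have hbmono : ∀ i, i + 1 < M → b i ≤ b (i+1) := by
    intro i hi
    have h := hmono (i+1) (by omega) (by omega)
    rw [hb_def]
    push_cast at h ⊢
    convert h using 2 <;> push_cast <;> ring
  have hchain : ∀ n i, i + n < M → b i ≤ b (i + n) := by
    intro n
    induction n with
    | zero => intro i _; simp
    | succ n ih =>
      intro i hi
      have h1 : b i ≤ b (i + n) := ih i (by omega)
      have h2 : b (i + n) ≤ b (i + n + 1) := hbmono (i + n) (by omega)
      calc b i ≤ b (i+n) := h1
        _ ≤ b (i + (n+1)) := by rw [show i + (n+1) = i + n + 1 by omega]; exact h2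
  have hbM : 0 < b (M-1) := by
    obtain ⟨k₀, hk1, hk2, hk3⟩ := hq0
    have hqk : 0 < q k₀ := lt_of_le_of_ne (hq k₀ hk1 hk2) (Ne.symm hk3)
    have hbk : 0 < b (k₀ - 1) := by
      have e : b (k₀ - 1) = (((k₀-1:ℕ):ℝ) + 1) * q k₀ := by
        simp only [hb_def]
        rw [show (k₀-1)+1 = k₀ by omega]
      rw [e]
      have h9 : (0:ℝ) < ((k₀-1:ℕ):ℝ) + 1 := by positivity
      exact mul_pos h9 hqk
    have := hchain (M - k₀) (k₀ - 1) (by omega)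
    rw [show k₀ - 1 + (M - k₀) = M - 1 by omega] at this
    linarith
  -- rewrite the function
  have hfun : (fun γ : ℝ =>
      γ * (∑ k ∈ Finset.range M, q (k + 1) * γ ^ k / k.factorial) * Real.exp (-γ) /
        (Real.exp (-γ) + τ * (1 - Real.exp (-γ)))) = Ff M b τ := by
    funext z
    rw [Ff, Pf]
    congr 1
    congr 1
    rw [Finset.mul_sum]
    apply Finset.sum_congr rfl
    intro k _
    have hf : ((k+1).factorial : ℝ) = ((k:ℝ)+1) * k.factorial := by
      push_cast [Nat.factorial_succ]; ring
    rw [hb_def, hf]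
    have hk0 : (k.factorial : ℝ) ≠ 0 := by positivity
    have hk1 : ((k:ℝ)+1) ≠ 0 := by positivity
    field_simp
    ring
  rw [hfun]
  -- the set S and its sup
  obtain ⟨T, hT1, hT⟩ := Sbound M b hM hb hbM
  set S : Set ℝ := {z : ℝ | 0 < z ∧ 0 ≤ Gf M b τ z} with hS_def
  have hSb : BddAbove (insert (0:ℝ) S) := by
    refine ⟨T, ?_⟩
    rintro z (rfl | hz)
    · linarith
    · by_contra h
      push_neg at h
      have hlt := hT z h
      -- G z ≥ 0 ⇒ Pf ≤ P1
      have hG := hz.2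
      have hz0 : 0 < z := hz.1
      have hexp : 0 < Real.exp (-z) := Real.exp_pos _
      have hP1 : 0 < P1 M b z := P1_pos M b hM hb hbM hz0
      rw [Gf] at hG
      nlinarith [mul_pos hexp hP1]
  set γs : ℝ := sSup (insert (0:ℝ) S) with hγs_def
  have hγs0 : 0 ≤ γs := le_csSup hSb (Set.mem_insert 0 S)
  refine ⟨γs, hγs0, ?_, ?_⟩
  · -- MonotoneOn
    apply monotoneOn_of_deriv_nonneg (convex_Icc 0 γs)
    · apply ContinuousOn.div
      · exact (Continuous.mul
          (Differentiable.continuous (fun x => (hasDerivAt_Pf M b x).differentiableAt))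
          (Real.continuous_exp.comp continuous_neg)).continuousOn
      · exact ((Real.continuous_exp.comp continuous_neg).add
          (continuous_const.mul (continuous_const.sub
            (Real.continuous_exp.comp continuous_neg)))).continuousOn
      · intro x hx
        have := Df_ge_one hτ hx.1
        intro h; rw [h] at this; linarith
    · intro x hx
      rw [interior_Icc] at hx
      exact (hasDerivAt_Ff M hM b hτ hx.1.le).differentiableAt.differentiableWithinAt
    · intro x hx
      rw [interior_Icc] at hx
      rw [(hasDerivAt_Ff M hM b hτ hx.1.le).deriv]
      have hG : 0 ≤ Gf M b τ x := by
        obtain ⟨y, hy, hxy⟩ := exists_lt_of_lt_csSup ⟨0, Set.mem_insert 0 S⟩ hx.2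
        rcases hy with rfl | hyS
        · linarith [hx.1]
        · exact C1 M b τ hM hb hbmono hbM hτ hx.1 hxy hyS.2
      apply div_nonneg _ (sq_nonneg _)
      exact mul_nonneg (Real.exp_pos _).le hG
  · -- AntitoneOn
    apply antitoneOn_of_deriv_nonpos (convex_Ici γs)
    · apply ContinuousOn.div
      · exact (Continuous.mul
          (Differentiable.continuous (fun x => (hasDerivAt_Pf M b x).differentiableAt))
          (Real.continuous_exp.comp continuous_neg)).continuousOn
      · exact ((Real.continuous_exp.comp continuous_neg).add
          (continuous_const.mul (continuous_const.sub
            (Real.continuous_exp.comp continuous_neg)))).continuousOn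
      · intro x hx
        have hx0 : 0 ≤ x := le_trans hγs0 hx
        have := Df_ge_one hτ hx0
        intro h; rw [h] at this; linarith
    · intro x hx
      rw [interior_Ici] at hx
      have hx0 : 0 < x := lt_of_le_of_lt hγs0 hx
      exact (hasDerivAt_Ff M hM b hτ hx0.le).differentiableAt.differentiableWithinAt
    · intro x hx
      rw [interior_Ici] at hx
      have hx0 : 0 < x := lt_of_le_of_lt hγs0 hx
      rw [(hasDerivAt_Ff M hM b hτ hx0.le).deriv]
      have hG : Gf M b τ x ≤ 0 := by
        by_contra h
        push_neg at h
        have hxS : x ∈ S := ⟨hx0, h.le⟩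
        have h8 := le_csSup hSb (Set.mem_insert_of_mem _ hxS)
        rw [← hγs_def] at h8
        have hxg : γs < x := hx
        linarith
      have hnum : Real.exp (-x) * Gf M b τ x ≤ 0 :=
        mul_nonpos_of_nonneg_of_nonpos (Real.exp_pos _).le hG
      exact div_nonpos_of_nonpos_of_nonneg hnum (sq_nonneg _)
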